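/- Define h(x) = √(2π) x e^{x²/2} ∫_{−∞}^{−x} (1/√(2π)) e^{−z²/2} dz = x e^{x²/2} ∫_x^∞ e^{−z²/2} dz. Then h is nondecreasing on (0, ∞). -/

import Mathlib

open Real MeasureTheory

noncomputable def h (x : ℝ) : ℝ :=
  x * Real.exp (x ^ 2 / 2) * ∫ z in Set.Ioi x, Real.exp (-z ^ 2 / 2)

namespace Stmt14Aux

noncomputable def φ (z : ℝ) : ℝ := Real.exp (-z ^ 2 / 2)

lemma φ_cont : Continuous φ := by unfold φ; fun_prop

lemma φ_pos (z : ℝ) : 0 < φ z := Real.exp_pos _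

lemma φ_integrable : Integrable φ := by
  have := integrable_exp_neg_mul_sq (b := (1/2 : ℝ)) (by norm_num)
  convert this using 2 with z
  unfold φ
  congr 1
  ring

noncomputable def G (x : ℝ) : ℝ := ∫ z in Set.Ioi x, φ z

lemma G_eq (y : ℝ) : G y = (∫ z in Set.Ioi (0:ℝ), φ z) - ∫ t in (0:ℝ)..y, φ t := by
  rcases le_or_gt 0 y with hy | hy
  · have : Set.Ioi (0:ℝ) = Set.Ioc 0 y ∪ Set.Ioi y := (Set.Ioc_union_Ioi_eq_Ioi hy).symm
    rw [intervalIntegral.integral_of_le hy, this,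
      setIntegral_union (Set.Ioc_disjoint_Ioi le_rfl) measurableSet_Ioi
        φ_integrable.integrableOn φ_integrable.integrableOn]
    unfold G; ring
  · have : Set.Ioi y = Set.Ioc y 0 ∪ Set.Ioi 0 := (Set.Ioc_union_Ioi_eq_Ioi hy.le).symm
    rw [intervalIntegral.integral_symm, intervalIntegral.integral_of_le hy.le]
    unfold G
    rw [this, setIntegral_union (Set.Ioc_disjoint_Ioi le_rfl) measurableSet_Ioi
        φ_integrable.integrableOn φ_integrable.integrableOn]
    ring

lemma G_hasDeriv (x : ℝ) : HasDerivAt G (-(φ x)) x := by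
  have h1 : HasDerivAt (fun y => ∫ t in (0:ℝ)..y, φ t) (φ x) x := by
    exact intervalIntegral.integral_hasDerivAt_right
      (φ_cont.intervalIntegrable _ _)
      (φ_cont.stronglyMeasurableAtFilter _ _)
      φ_cont.continuousAt
  have : HasDerivAt (fun y => (∫ z in Set.Ioi (0:ℝ), φ z) - ∫ t in (0:ℝ)..y, φ t)
      (-(φ x)) x := (h1.const_sub _)
  exact this.congr_of_eventuallyEq (Filter.Eventually.of_forall fun y => G_eq y)

lemma G_tendsto : Filter.Tendsto G Filter.atTop (nhds 0) := by
  have := intervalIntegral_tendsto_integral_Ioi (μ := volume) 0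
    φ_integrable.integrableOn Filter.tendsto_id
  have h2 : Filter.Tendsto (fun y => (∫ z in Set.Ioi (0:ℝ), φ z) - ∫ t in (0:ℝ)..y, φ t)
      Filter.atTop (nhds ((∫ z in Set.Ioi (0:ℝ), φ z) - ∫ z in Set.Ioi (0:ℝ), φ z)) :=
    Filter.Tendsto.const_sub _ this
  rw [sub_self] at h2
  exact h2.congr fun y => (G_eq y).symm

noncomputable def f (x : ℝ) : ℝ := x / (1 + x ^ 2) * φ x

lemma f_hasDeriv (x : ℝ) :
    HasDerivAt f ((1 - 2*x^2 - x^4) / (1 + x^2)^2 * φ x) x := by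
  have hden : (1 + x ^ 2) ≠ 0 := by positivity
  have h1 : HasDerivAt (fun y : ℝ => y / (1 + y ^ 2))
      ((1 * (1 + x^2) - x * (2*x)) / (1 + x^2)^2) x := by
    exact (hasDerivAt_id x).div (((hasDerivAt_pow 2 x).const_add 1).congr_deriv (by ring)) hden
  have h2 : HasDerivAt φ (-x * φ x) x := by
    have : HasDerivAt (fun y : ℝ => -y ^ 2 / 2) (-x) x := by
      have := ((hasDerivAt_pow 2 x).neg).div_const 2
      exact this.congr_deriv (by ring)
    exact (this.exp).congr_deriv (by unfold φ; ring)
  have := h1.mul h2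
  refine this.congr_deriv ?_
  field_simp
  ring

noncomputable def D (x : ℝ) : ℝ := G x - f x

lemma D_hasDeriv (x : ℝ) : HasDerivAt D (-(2 / (1 + x^2)^2 * φ x)) x := by
  have := (G_hasDeriv x).sub (f_hasDeriv x)
  refine this.congr_deriv ?_
  have hden : (1 + x ^ 2) ≠ 0 := by positivity
  field_simp
  ring

lemma D_antitone : Antitone D := by
  refine antitone_of_deriv_nonpos (fun x => (D_hasDeriv x).differentiableAt) fun x => ?_
  rw [(D_hasDeriv x).deriv]
  have := φ_pos x
  have : (0:ℝ) < 2 / (1 + x^2)^2 * φ x := by positivity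
  linarith

lemma f_tendsto : Filter.Tendsto f Filter.atTop (nhds 0) := by
  have hexp : Filter.Tendsto φ Filter.atTop (nhds 0) := by
    have hsq : Filter.Tendsto (fun x : ℝ => x ^ 2 / 2) Filter.atTop Filter.atTop :=
      (Filter.tendsto_pow_atTop (two_ne_zero)).atTop_div_const (by norm_num)
    have h0 : Filter.Tendsto (fun x : ℝ => -(x ^ 2 / 2)) Filter.atTop Filter.atBot :=
      Filter.tendsto_neg_atTop_atBot.comp hsq
    refine (Real.tendsto_exp_atBot.comp h0).congr fun x => ?_
    show Real.exp (-(x ^ 2 / 2)) = φ x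
    unfold φ
    congr 1
    ring
  have hle : ∀ᶠ x in Filter.atTop, f x ≤ φ x := by
    filter_upwards [Filter.eventually_ge_atTop (0:ℝ)] with x hx
    have h1 : x / (1 + x ^ 2) ≤ 1 := by
      rw [div_le_one (by positivity)]; nlinarith
    have := (φ_pos x).le
    calc f x = x / (1 + x^2) * φ x := rfl
      _ ≤ 1 * φ x := by apply mul_le_mul_of_nonneg_right h1 this
      _ = φ x := one_mul _
  have hge : ∀ᶠ x in Filter.atTop, 0 ≤ f x := by
    filter_upwards [Filter.eventually_ge_atTop (0:ℝ)] with x hx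
    have := (φ_pos x).le
    have : 0 ≤ x / (1 + x ^ 2) := by positivity
    unfold f; positivity
  exact tendsto_of_tendsto_of_tendsto_of_le_of_le' tendsto_const_nhds hexp hge hle

lemma D_nonneg (x : ℝ) : 0 ≤ D x := by
  have hT : Filter.Tendsto D Filter.atTop (nhds 0) := by
    exact (by simpa using G_tendsto.sub f_tendsto : Filter.Tendsto (fun x => G x - f x) _ _)
  refine le_of_tendsto hT ?_
  filter_upwards [Filter.eventually_ge_atTop x] with y hy
  exact D_antitone hy

lemma h_eq (x : ℝ) : h x = x * Real.exp (x ^ 2 / 2) * G x := rfl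

lemma h_hasDeriv (x : ℝ) :
    HasDerivAt h ((1 + x^2) * Real.exp (x^2/2) * G x - x) x := by
  have h2 : HasDerivAt (fun y : ℝ => Real.exp (y ^ 2 / 2)) (x * Real.exp (x^2/2)) x := by
    have : HasDerivAt (fun y : ℝ => y ^ 2 / 2) x x :=
      ((hasDerivAt_pow 2 x).div_const 2).congr_deriv (by ring)
    exact this.exp.congr_deriv (by ring)
  have hu : HasDerivAt (fun y : ℝ => y * Real.exp (y ^ 2 / 2))
      ((1 + x^2) * Real.exp (x^2/2)) x :=
    ((hasDerivAt_id x).mul h2).congr_deriv (by simp only [id_eq]; ring)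
  have := hu.mul (G_hasDeriv x)
  refine (this.congr_deriv ?_ : HasDerivAt h _ x)
  have hid : Real.exp (x^2/2) * φ x = 1 := by
    unfold φ; rw [← Real.exp_add]
    norm_num [neg_div]
  linear_combination (-x) * hid

lemma h_deriv_nonneg {x : ℝ} (hx : 0 < x) : 0 ≤ deriv h x := by
  rw [(h_hasDeriv x).deriv]
  have hD := D_nonneg x
  have hGf : x / (1 + x ^ 2) * φ x ≤ G x := sub_nonneg.mp hD
  have hden : (0:ℝ) < 1 + x ^ 2 := by positivity
  have hexp : (0:ℝ) < Real.exp (x^2/2) := Real.exp_pos _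
  have hid : Real.exp (x^2/2) * φ x = 1 := by
    unfold φ; rw [← Real.exp_add]
    norm_num [neg_div]
  have key : x ≤ (1 + x^2) * Real.exp (x^2/2) * G x := by
    have h1 : (1 + x^2) * Real.exp (x^2/2) * (x / (1 + x ^ 2) * φ x)
        ≤ (1 + x^2) * Real.exp (x^2/2) * G x := by
      apply mul_le_mul_of_nonneg_left hGf (by positivity)
    calc x = (1 + x^2) * Real.exp (x^2/2) * (x / (1 + x ^ 2) * φ x) := by
          field_simp
          linear_combination (-1) * hid
      _ ≤ _ := h1
  linarith

end Stmt14Aux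

theorem stmt_14 : ∀ a b : ℝ, 0 < a → a ≤ b → h a ≤ h b := by
  intro a b ha hab
  have hmono : MonotoneOn h (Set.Ici a) := by
    apply monotoneOn_of_deriv_nonneg (convex_Ici a)
    · exact Continuous.continuousOn (by
        have : Differentiable ℝ h := fun x => (Stmt14Aux.h_hasDeriv x).differentiableAt
        exact this.continuous)
    · intro x hx
      exact ((Stmt14Aux.h_hasDeriv x).differentiableAt).differentiableWithinAt
    · intro x hx
      rw [interior_Ici] at hx
      exact Stmt14Aux.h_deriv_nonneg (ha.trans hx)
  exact hmono Set.self_mem_Ici hab hab
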